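/- arXiv:0908.0455 — 4 statements merged into one kernel-verified Lean document; each statement's English description precedes it below -/
import Mathlib

section
/- Let (α, ω_A) and (β, ω_B) be Busby–Smith twisted actions of G on unital C*-algebras A and B. If (f, V) is a transformation from (α, ω_A) to (β, ω_B), i.e. f : A → B is a unital *-homomorphism and V_g ∈ U(B) satisfy V_g β_g(f(a)) V_g* = f(α_g(a)) and V_{g₁} β_{g₁}(V_{g₂}) ω_B(g₁,g₂)* = f(ω_A(g₁,g₂)*) V_{g₁g₂}, then (f, V) decomposes as a strictly equivariant map followed by an exterior equivalence: the maps β'_g := Ad_{V_g} ∘ β_g with ω'_B(g₁,g₂) := V_{g₁g₂} ω_B(g₁,g₂) β_{g₁}(V_{g₂})* V_{g₁}* form a twisted action, f satisfies f ∘ α_g = β'_g ∘ f and f(ω_A(g₁,g₂)) = ω'_B(g₁,g₂), and (V_g) is an exterior equivalence from (β', ω'_B) to (β, ω_B). -/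
private lemma cancel_aux {B : Type*} [Monoid B] [StarMul B]
    (u v w z x y : B) (hu : star u * u = 1) (hv : star v * v = 1)
    (hmid : w * x * star w = y) :
    (z * w * star v * star u) * (u * (v * x * star v) * star u)
      * (u * v * star w * star z) = z * y * star z := by
  have hu' : ∀ c : B, star u * (u * c) = c := fun c => by
    rw [← mul_assoc, hu, one_mul]
  have hv' : ∀ c : B, star v * (v * c) = c := fun c => by
    rw [← mul_assoc, hv, one_mul]
  simp only [mul_assoc, hu', hv']
  rw [← hmid]
  simp only [mul_assoc]

theorem statement6
    {G : Type*} [Group G] {A B : Type*} [CStarAlgebra A] [CStarAlgebra B]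
    (α : G → (A ≃⋆ₐ[ℂ] A)) (ωA : G → G → unitary A)
    (hωA : ∀ g₁ g₂ : G, ∀ a : A,
      (ωA g₁ g₂ : A) * α g₁ (α g₂ a) * star (ωA g₁ g₂ : A) = α (g₁ * g₂) a)
    (hcocycleA : ∀ g₁ g₂ g₃ : G,
      α g₁ (star (ωA g₂ g₃ : A)) * star (ωA g₁ (g₂ * g₃) : A)
        = star (ωA g₁ g₂ : A) * star (ωA (g₁ * g₂) g₃ : A))
    (β : G → (B ≃⋆ₐ[ℂ] B)) (ωB : G → G → unitary B)
    (hωB : ∀ g₁ g₂ : G, ∀ b : B,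
      (ωB g₁ g₂ : B) * β g₁ (β g₂ b) * star (ωB g₁ g₂ : B) = β (g₁ * g₂) b)
    (hcocycleB : ∀ g₁ g₂ g₃ : G,
      β g₁ (star (ωB g₂ g₃ : B)) * star (ωB g₁ (g₂ * g₃) : B)
        = star (ωB g₁ g₂ : B) * star (ωB (g₁ * g₂) g₃ : B))
    -- the transformation `(f, V)`:
    (f : A →⋆ₐ[ℂ] B) (V : G → unitary B)
    (htrans₁ : ∀ g : G, ∀ a : A,
      (V g : B) * β g (f a) * star (V g : B) = f (α g a))
    (htrans₂ : ∀ g₁ g₂ : G,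
      (V g₁ : B) * β g₁ (V g₂ : B) * star (ωB g₁ g₂ : B)
        = f (star (ωA g₁ g₂ : A)) * (V (g₁ * g₂) : B))
    -- the intermediate twisted action `(β', ω'_B)`:
    (β' : G → B → B)
    (hβ' : ∀ g b, β' g b = (V g : B) * β g b * star (V g : B))
    (ω'B : G → G → B)
    (hω'B : ∀ g₁ g₂, ω'B g₁ g₂ = (V (g₁ * g₂) : B) * (ωB g₁ g₂ : B)
        * star (β g₁ (V g₂ : B)) * star (V g₁ : B)) :
    -- (i) `(β', ω'_B)` is a twisted action:
    ((∀ g₁ g₂ : G, ω'B g₁ g₂ ∈ unitary B) ∧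
     (∀ g₁ g₂ : G, ∀ b : B,
        ω'B g₁ g₂ * β' g₁ (β' g₂ b) * star (ω'B g₁ g₂) = β' (g₁ * g₂) b) ∧
     (∀ g₁ g₂ g₃ : G,
        β' g₁ (star (ω'B g₂ g₃)) * star (ω'B g₁ (g₂ * g₃))
          = star (ω'B g₁ g₂) * star (ω'B (g₁ * g₂) g₃))) ∧
    -- (ii) `f` is strictly equivariant from `(α, ω_A)` to `(β', ω'_B)`:
    ((∀ g : G, ∀ a : A, f (α g a) = β' g (f a)) ∧
     (∀ g₁ g₂ : G, f (ωA g₁ g₂ : A) = ω'B g₁ g₂)) ∧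
    -- (iii) `(V_g)` is an exterior equivalence from `(β', ω'_B)` to `(β, ω_B)`:
    ((∀ g : G, ∀ b : B, β' g b = (V g : B) * β g b * star (V g : B)) ∧
     (∀ g₁ g₂ : G, star (ω'B g₁ g₂)
        = (V g₁ : B) * β g₁ (V g₂ : B) * star (ωB g₁ g₂ : B)
            * star (V (g₁ * g₂) : B))) := by
  have mulstarB : ∀ u : unitary B, (u : B) * star (u : B) = 1 :=
    fun u => Unitary.mul_star_self_of_mem u.prop
  have starmulB : ∀ u : unitary B, star (u : B) * (u : B) = 1 :=
    fun u => Unitary.star_mul_self_of_mem u.prop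
  have mulstarA : ∀ u : unitary A, (u : A) * star (u : A) = 1 :=
    fun u => Unitary.mul_star_self_of_mem u.prop
  have starmulA : ∀ u : unitary A, star (u : A) * (u : A) = 1 :=
    fun u => Unitary.star_mul_self_of_mem u.prop
  -- key fact: `ω'B = f ∘ ωA`
  have key : ∀ g₁ g₂ : G, ω'B g₁ g₂ = f (ωA g₁ g₂ : A) := by
    intro g₁ g₂
    rw [hω'B]
    calc (V (g₁ * g₂) : B) * (ωB g₁ g₂ : B) * star (β g₁ (V g₂ : B))
          * star (V g₁ : B)
        = (V (g₁ * g₂) : B)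
            * star ((V g₁ : B) * β g₁ (V g₂ : B) * star (ωB g₁ g₂ : B)) := by
          simp [star_mul, mul_assoc]
      _ = (V (g₁ * g₂) : B)
            * star (f (star (ωA g₁ g₂ : A)) * (V (g₁ * g₂) : B)) := by
          rw [htrans₂]
      _ = f (ωA g₁ g₂ : A) := by
          rw [star_mul, map_star, star_star, ← mul_assoc,
            mulstarB, one_mul]
  have equiv₁ : ∀ g : G, ∀ a : A, f (α g a) = β' g (f a) := by
    intro g a
    rw [hβ']
    exact (htrans₁ g a).symm
  refine ⟨⟨?_, ?_, ?_⟩, ⟨equiv₁, fun g₁ g₂ => (key g₁ g₂).symm⟩,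
    ⟨hβ', ?_⟩⟩
  · -- unitarity
    intro g₁ g₂
    rw [key, Unitary.mem_iff]
    constructor
    · rw [← map_star, ← map_mul, starmulA, map_one]
    · rw [← map_star, ← map_mul, mulstarA, map_one]
  · -- twisted action relation
    intro g₁ g₂ b
    have expand : β' g₁ (β' g₂ b)
        = (V g₁ : B) * (β g₁ (V g₂ : B) * β g₁ (β g₂ b)
            * star (β g₁ (V g₂ : B))) * star (V g₁ : B) := by
      rw [hβ', hβ', map_mul, map_mul, map_star]
    have hstar : star (ω'B g₁ g₂)
        = (V g₁ : B) * β g₁ (V g₂ : B) * star (ωB g₁ g₂ : B)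
            * star (V (g₁ * g₂) : B) := by
      rw [hω'B]; simp [star_mul, mul_assoc]
    rw [expand, hstar, hω'B, hβ' (g₁ * g₂)]
    exact cancel_aux (V g₁ : B) (β g₁ (V g₂ : B)) (ωB g₁ g₂ : B)
      (V (g₁ * g₂) : B) (β g₁ (β g₂ b)) (β (g₁ * g₂) b)
      (starmulB _)
      (by rw [← map_star, ← map_mul, starmulB, map_one])
      (hωB g₁ g₂ b)
  · -- cocycle relation
    intro g₁ g₂ g₃
    rw [key, key, key, key, ← map_star, ← map_star, ← map_star, ← map_star,
      ← equiv₁ g₁, ← map_mul, ← map_mul, hcocycleA]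
  · -- exterior equivalence cocycle identity
    intro g₁ g₂
    rw [hω'B]; simp [star_mul, mul_assoc]
end

section
/- A strictly continuous unital *-homomorphism f : M(A) → M(B) between multiplier algebras of C*-algebras A and B is an equivalence in the 2-category of C*-algebras with *-representations as arrows and unitary intertwiners as 2-morphisms if and only if f restricts to a C*-algebra isomorphism A → B. In particular, if there exists a strictly continuous unital *-homomorphism g : M(B) → M(A) and unitaries u ∈ M(B), v ∈ M(A) with f ∘ g = Ad_u and g ∘ f = Ad_v, then f(A) = B and f|_A : A → B is a *-isomorphism. -/
open scoped MultiplierAlgebra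

/-!
STATEMENT 8: A strictly continuous unital *-homomorphism `f : M(A) → M(B)`
is an equivalence in the 2-category `𝔠*(2)` (i.e. it admits a strictly
continuous unital *-homomorphism `g : M(B) → M(A)` and unitaries `u ∈ M(B)`,
`v ∈ M(A)` with `f ∘ g = Ad_u` and `g ∘ f = Ad_v`) if and only if `f`
restricts to a C*-algebra isomorphism `A → B`.
-/

/-- The strict topology on the multiplier algebra `𝓜(ℂ, A)`: the topology
generated by the maps `m ↦ (m·a, a·m)` for `a ∈ A`. -/
noncomputable def strictTopology (A : Type*) [NonUnitalCStarAlgebra A] :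
    TopologicalSpace 𝓜(ℂ, A) :=
  ⨅ a : A, TopologicalSpace.induced
    (fun m : 𝓜(ℂ, A) => (m.fst a, m.snd a)) inferInstance

/-- A map between multiplier algebras is strictly continuous if it is
continuous for the strict topologies. -/
def StrictlyContinuous {A B : Type*} [NonUnitalCStarAlgebra A]
    [NonUnitalCStarAlgebra B] (f : 𝓜(ℂ, A) → 𝓜(ℂ, B)) : Prop :=
  @Continuous _ _ (strictTopology A) (strictTopology B) f

open Unitization Metric

namespace Aux

variable {A : Type*} [NonUnitalCStarAlgebra A]

lemma left_cancel {a b : A} (h : ∀ c, c * a = c * b) : a = b := by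
  have h' : star (a - b) * (a - b) = 0 := by
    have := h (star (a - b))
    rw [mul_sub, this, ← mul_sub, sub_self, mul_zero]
  rwa [CStarRing.star_mul_self_eq_zero_iff, sub_eq_zero] at h'

lemma right_cancel {a b : A} (h : ∀ c, a * c = b * c) : a = b := by
  have h' : (a - b) * star (a - b) = 0 := by
    have := h (star (a - b))
    rw [sub_mul, this, ← sub_mul, sub_self, zero_mul]
  rwa [CStarRing.mul_star_self_eq_zero_iff, sub_eq_zero] at h'

lemma coe_injective : Function.Injective ((↑) : A → 𝓜(ℂ, A)) := by
  intro a b h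
  refine right_cancel fun c => ?_
  have := congrArg (fun m : 𝓜(ℂ, A) => m.fst c) h
  simpa using this

lemma fst_mul_right (m : 𝓜(ℂ, A)) (a b : A) : m.fst (a * b) = m.fst a * b := by
  refine left_cancel fun c => ?_
  calc c * m.fst (a * b) = m.snd c * (a * b) := (m.central c (a * b)).symm
    _ = (m.snd c * a) * b := (mul_assoc _ _ _).symm
    _ = (c * m.fst a) * b := by rw [m.central c a]
    _ = c * (m.fst a * b) := mul_assoc _ _ _

lemma snd_mul_left (m : 𝓜(ℂ, A)) (a b : A) : m.snd (a * b) = a * m.snd b := by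
  refine right_cancel fun c => ?_
  calc m.snd (a * b) * c = (a * b) * m.fst c := m.central (a * b) c
    _ = a * (b * m.fst c) := mul_assoc _ _ _
    _ = a * (m.snd b * c) := by rw [m.central b c]
    _ = (a * m.snd b) * c := (mul_assoc _ _ _).symm

lemma mul_coe (m : 𝓜(ℂ, A)) (a : A) :
    m * (a : 𝓜(ℂ, A)) = ((m.fst a : A) : 𝓜(ℂ, A)) := by
  refine DoubleCentralizer.ext _ _ _ _ (Prod.ext ?_ ?_)
  · ext x
    exact fst_mul_right m a x
  · ext x
    show (m * (a : 𝓜(ℂ, A))).snd x = _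
    rw [DoubleCentralizer.mul_snd]
    simpa using m.central x a

lemma coe_mul (m : 𝓜(ℂ, A)) (a : A) :
    (a : 𝓜(ℂ, A)) * m = ((m.snd a : A) : 𝓜(ℂ, A)) := by
  refine DoubleCentralizer.ext _ _ _ _ (Prod.ext ?_ ?_)
  · ext x
    show ((a : 𝓜(ℂ, A)) * m).fst x = _
    rw [DoubleCentralizer.mul_fst]
    simpa using (m.central a x).symm
  · ext x
    show ((a : 𝓜(ℂ, A)) * m).snd x = _
    rw [DoubleCentralizer.mul_snd]
    simpa using snd_mul_left m x a


set_option maxHeartbeats 1000000 in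
lemma exists_approx (F : Finset A) {ε : ℝ} (hε : 0 < ε) :
    ∃ e : A, ∀ c ∈ F, ‖c - e * c‖ < ε ∧ ‖c - c * e‖ < ε := by
  classical
  letI : PartialOrder (Unitization ℂ A) := CStarAlgebra.spectralOrder _
  haveI : StarOrderedRing (Unitization ℂ A) := CStarAlgebra.spectralOrderedRing _
  obtain ⟨n, hn⟩ : ∃ n : ℕ, (1 : ℝ) / (n + 1) < ε ^ 2 := by
    obtain ⟨n, hn⟩ := exists_nat_gt ((1 : ℝ) / ε ^ 2)
    refine ⟨n, ?_⟩
    rw [div_lt_iff₀ (by positivity)]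
    rw [div_lt_iff₀ (by positivity)] at hn
    nlinarith
  set x : A := ∑ c ∈ F, (star c * c + c * star c) with hxdef
  have hxsa : IsSelfAdjoint x := by
    simp only [IsSelfAdjoint, hxdef, star_sum, star_add, star_mul, star_star]
  set X : Unitization ℂ A := (x : Unitization ℂ A) with hXdef
  have hXrepr : X = ∑ c ∈ F, (star ((c : Unitization ℂ A)) * ((c : Unitization ℂ A)) +
      ((c : Unitization ℂ A)) * star ((c : Unitization ℂ A))) := by
    rw [hXdef, hxdef]
    calc ((∑ c ∈ F, (star c * c + c * star c) : A) : Unitization ℂ A)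
        = (inrNonUnitalStarAlgHom ℂ A) (∑ c ∈ F, (star c * c + c * star c)) := rfl
      _ = ∑ c ∈ F, (inrNonUnitalStarAlgHom ℂ A) (star c * c + c * star c) :=
          map_sum _ _ _
      _ = _ := Finset.sum_congr rfl fun c _ => by
          simp only [map_add, map_mul, map_star, inrNonUnitalStarAlgHom_apply]
  have hX₀ : 0 ≤ X := by
    rw [hXrepr]
    exact Finset.sum_nonneg fun c _ =>
      add_nonneg (star_mul_self_nonneg _) (mul_star_self_nonneg _)
  have hXsa : IsSelfAdjoint X := hxsa.inr ℂ
  have hspec : ∀ t ∈ spectrum ℝ X, (0 : ℝ) ≤ t := fun t ht =>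
    spectrum_nonneg_of_nonneg hX₀ ht
  set g : ℝ → ℝ := fun t => ((n + 1) * t + 1)⁻¹ with hgdef
  set f : ℝ → ℝ := fun t => 1 - ((n + 1) * t + 1)⁻¹ with hfdef
  have hgc : ContinuousOn g (spectrum ℝ X) := by
    apply ContinuousOn.inv₀ (by fun_prop)
    intro t ht
    have := hspec t ht
    nlinarith
  have hfc : ContinuousOn f (spectrum ℝ X) := continuousOn_const.sub hgc
  set e : A := cfcₙ f x with hedef
  have hesa : IsSelfAdjoint e := cfcₙ_predicate f x
  have hE : (e : Unitization ℂ A) = cfc f X :=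
    Unitization.real_cfcₙ_eq_cfc_inr x f (by norm_num [hfdef])
  set Y : Unitization ℂ A := 1 - (e : Unitization ℂ A) with hYdef
  have h1cfc : (1 : Unitization ℂ A) = cfc (fun _ : ℝ => (1 : ℝ)) X :=
    (cfc_const_one ℝ X).symm
  have hYg : Y = cfc g X := by
    rw [hYdef, hE, h1cfc, ← cfc_sub _ _ X continuousOn_const hfc]
    exact cfc_congr fun t _ => by simp [hfdef, hgdef]
  have hYsa : IsSelfAdjoint Y := by
    rw [hYg]; exact cfc_predicate g X
  have hYXY : ‖Y * X * Y‖ ≤ 1 / (n + 1) := by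
    have h1 : Y * X * Y = cfc (fun t => g t * t * g t) X := by
      calc Y * X * Y = cfc g X * cfc (fun t : ℝ => t) X * cfc g X := by
            rw [hYg, cfc_id' ℝ X]
        _ = _ := by
            rw [← cfc_mul g _ X hgc (continuousOn_id' _),
              ← cfc_mul (fun x => g x * x) g X (hgc.mul (continuousOn_id' _)) hgc]
    rw [h1]
    refine norm_cfc_le (by positivity) fun t ht => ?_
    have ht0 := hspec t ht
    have hs : (0 : ℝ) < (n + 1) * t + 1 := by nlinarith
    have hnn : (0 : ℝ) ≤ g t * t * g t := by
      simp only [hgdef]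
      exact mul_nonneg (mul_nonneg (inv_nonneg.mpr hs.le) ht0) (inv_nonneg.mpr hs.le)
    rw [Real.norm_eq_abs, abs_of_nonneg hnn]
    simp only [hgdef]
    calc ((n + 1) * t + 1)⁻¹ * t * ((n + 1) * t + 1)⁻¹
        ≤ ((n + 1) * t + 1)⁻¹ * t * 1 :=
          mul_le_mul_of_nonneg_left (inv_le_one_of_one_le₀ (by nlinarith))
            (mul_nonneg (inv_nonneg.mpr hs.le) ht0)
      _ = t / ((n + 1) * t + 1) := by rw [mul_one]; ring
      _ ≤ 1 / (n + 1) := by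
          rw [div_le_div_iff₀ hs (by positivity)]
          nlinarith
  have key : ∀ D : Unitization ℂ A, D * star D ≤ X → ‖Y * D‖ < ε := by
    intro D hD
    have hsq : Y * (D * star D) * Y = (Y * D) * star (Y * D) := by
      rw [star_mul, hYsa.star_eq]
      noncomm_ring
    have h1 : Y * (D * star D) * Y ≤ Y * X * Y := by
      have := star_left_conjugate_le_conjugate hD Y
      rwa [hYsa.star_eq] at this
    have h2 : (0 : Unitization ℂ A) ≤ Y * (D * star D) * Y := by
      rw [hsq]; exact mul_star_self_nonneg _
    have h3 : ‖Y * D‖ ^ 2 = ‖Y * (D * star D) * Y‖ := by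
      rw [hsq, CStarRing.norm_self_mul_star, sq]
    have h4 : ‖Y * (D * star D) * Y‖ ≤ ‖Y * X * Y‖ :=
      CStarAlgebra.norm_le_norm_of_nonneg_of_le h2 h1
    nlinarith [norm_nonneg (Y * D)]
  have hle : ∀ c ∈ F, (c : Unitization ℂ A) * star (c : Unitization ℂ A) ≤ X ∧
      star (c : Unitization ℂ A) * (c : Unitization ℂ A) ≤ X := by
    intro c hc
    constructor
    · rw [← sub_nonneg]
      have hrepr2 : X - (c : Unitization ℂ A) * star (c : Unitization ℂ A) =
          (∑ c' ∈ F, star ((c' : Unitization ℂ A)) * ((c' : Unitization ℂ A))) +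
            ∑ c' ∈ F.erase c, ((c' : Unitization ℂ A)) * star ((c' : Unitization ℂ A)) := by
        rw [hXrepr, Finset.sum_add_distrib,
          ← Finset.add_sum_erase _ (fun c' : A => ((c' : Unitization ℂ A)) * star ((c' : Unitization ℂ A))) hc]
        abel
      rw [hrepr2]
      exact add_nonneg (Finset.sum_nonneg fun c' _ => star_mul_self_nonneg _)
        (Finset.sum_nonneg fun c' _ => mul_star_self_nonneg _)
    · rw [← sub_nonneg]
      have hrepr2 : X - star (c : Unitization ℂ A) * (c : Unitization ℂ A) =
          (∑ c' ∈ F.erase c, star ((c' : Unitization ℂ A)) * ((c' : Unitization ℂ A))) +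
            ∑ c' ∈ F, ((c' : Unitization ℂ A)) * star ((c' : Unitization ℂ A)) := by
        rw [hXrepr, Finset.sum_add_distrib,
          ← Finset.add_sum_erase _ (fun c' : A => star ((c' : Unitization ℂ A)) * ((c' : Unitization ℂ A))) hc]
        abel
      rw [hrepr2]
      exact add_nonneg (Finset.sum_nonneg fun c' _ => star_mul_self_nonneg _)
        (Finset.sum_nonneg fun c' _ => mul_star_self_nonneg _)
  refine ⟨e, fun c hc => ?_⟩
  obtain ⟨hD1, hD2⟩ := hle c hc
  constructor
  · have h := key (c : Unitization ℂ A) hD1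
    have heq : ‖c - e * c‖ = ‖Y * (c : Unitization ℂ A)‖ := by
      rw [← Unitization.norm_inr (𝕜 := ℂ) (c - e * c)]
      congr 1
      rw [inr_sub ℂ, inr_mul, hYdef]
      noncomm_ring
    rwa [heq]
  · have h := key (star (c : Unitization ℂ A)) (by rwa [star_star])
    have heq : ‖c - c * e‖ = ‖Y * star (c : Unitization ℂ A)‖ := by
      rw [← Unitization.norm_inr (𝕜 := ℂ) (c - c * e), ← norm_star]
      congr 1
      rw [inr_sub ℂ, inr_mul, star_sub, star_mul, (hesa.inr ℂ).star_eq, hYdef]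
      noncomm_ring
    rwa [heq]


lemma strict_continuous_pair {A : Type*} [NonUnitalCStarAlgebra A] (a : A) :
    @Continuous _ _ (strictTopology A) _
      (fun m : 𝓜(ℂ, A) => (m.fst a, m.snd a)) :=
  continuous_iInf_dom (i := a) continuous_induced_dom

lemma nhds_one_strict {B : Type*} [NonUnitalCStarAlgebra B] :
    @nhds _ (strictTopology B) (1 : 𝓜(ℂ, B)) =
      ⨅ b : B, Filter.comap (fun m : 𝓜(ℂ, B) => (m.fst b, m.snd b)) (nhds (b, b)) := by
  rw [strictTopology, nhds_iInf]
  refine iInf_congr fun b => ?_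
  rw [nhds_induced]
  rfl

lemma exists_approx_strict {A B : Type*} [NonUnitalCStarAlgebra A] [NonUnitalCStarAlgebra B]
    (g : 𝓜(ℂ, B) →⋆ₐ[ℂ] 𝓜(ℂ, A)) (hg : StrictlyContinuous ⇑g) (a : A) {ε : ℝ} (hε : 0 < ε) :
    ∃ b : B, ‖(g (b : 𝓜(ℂ, B))).fst a - a‖ < ε := by
  classical
  set V : Set 𝓜(ℂ, A) :=
    (fun m : 𝓜(ℂ, A) => (m.fst a, m.snd a)) ⁻¹' (ball ((a, a) : A × A) ε) with hVdef
  have hV : @IsOpen _ (strictTopology A) V :=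
    @Continuous.isOpen_preimage _ _ (strictTopology A) _ _
      (strict_continuous_pair (A := A) a) _ isOpen_ball
  set U : Set 𝓜(ℂ, B) := ⇑g ⁻¹' V with hUdef
  have hU : @IsOpen _ (strictTopology B) U :=
    @Continuous.isOpen_preimage _ _ (strictTopology B) (strictTopology A) _ hg _ hV
  have h1U : (1 : 𝓜(ℂ, B)) ∈ U := by
    show ((g 1).fst a, (g 1).snd a) ∈ ball ((a, a) : A × A) ε
    rw [map_one]
    simp [DoubleCentralizer.one_fst, DoubleCentralizer.one_snd, mem_ball, Prod.dist_eq, hε]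
  have hUnhds : U ∈ @nhds _ (strictTopology B) (1 : 𝓜(ℂ, B)) :=
    (@isOpen_iff_mem_nhds 𝓜(ℂ, B) (strictTopology B) U).mp hU 1 h1U
  rw [nhds_one_strict] at hUnhds
  obtain ⟨I, hIfin, W, hW, hWuniv, -, hUeq⟩ := Filter.mem_iInf'.mp hUnhds
  choose r hr hball using fun b : B =>
    Metric.mem_nhds_iff.mp (Filter.mem_comap.mp (hW b)).choose_spec.1
  set T := fun b : B => (Filter.mem_comap.mp (hW b)).choose with hTdef
  have hTsub : ∀ b : B, (fun m : 𝓜(ℂ, B) => (m.fst b, m.snd b)) ⁻¹' T b ⊆ W b :=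
    fun b => (Filter.mem_comap.mp (hW b)).choose_spec.2
  set F : Finset B := hIfin.toFinset with hFdef
  obtain ⟨δ, hδ0, hδle⟩ : ∃ δ : ℝ, 0 < δ ∧ ∀ b ∈ F, δ ≤ r b := by
    rcases F.eq_empty_or_nonempty with hFe | hne
    · exact ⟨1, one_pos, by simp [hFe]⟩
    · exact ⟨F.inf' hne r, (Finset.lt_inf'_iff hne).mpr fun b _ => hr b,
        fun b hb => Finset.inf'_le r hb⟩
  obtain ⟨e, he⟩ := exists_approx F hδ0
  have hmem : (e : 𝓜(ℂ, B)) ∈ U := by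
    rw [hUeq]
    refine Set.mem_iInter.mpr fun b => ?_
    by_cases hbI : b ∈ I
    · have hbF : b ∈ F := hIfin.mem_toFinset.mpr hbI
      obtain ⟨h1, h2⟩ := he b hbF
      refine hTsub b ?_
      refine hball b ?_
      have hfst : ((e : 𝓜(ℂ, B)).fst b, (e : 𝓜(ℂ, B)).snd b) = (e * b, b * e) := by
        simp [DoubleCentralizer.coe_fst, DoubleCentralizer.coe_snd,
          ContinuousLinearMap.mul_apply', ContinuousLinearMap.flip_apply]
      show ((e : 𝓜(ℂ, B)).fst b, (e : 𝓜(ℂ, B)).snd b) ∈ ball ((b, b) : B × B) (r b)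
      rw [hfst, mem_ball, Prod.dist_eq, dist_eq_norm, dist_eq_norm]
      have h1' : ‖e * b - b‖ < r b := lt_of_lt_of_le (by rwa [norm_sub_rev] at h1) (hδle b hbF)
      have h2' : ‖b * e - b‖ < r b := lt_of_lt_of_le (by rwa [norm_sub_rev] at h2) (hδle b hbF)
      exact max_lt h1' h2'
    · rw [hWuniv b hbI]
      trivial
  have h2 : ((g (e : 𝓜(ℂ, B))).fst a, (g (e : 𝓜(ℂ, B))).snd a) ∈ ball ((a, a) : A × A) ε :=
    hmem
  refine ⟨e, ?_⟩
  have h3 := (max_lt_iff.mp (by rwa [mem_ball, Prod.dist_eq] at h2)).1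
  rwa [dist_eq_norm] at h3


lemma coe_eq_coeHom : ((↑) : A → 𝓜(ℂ, A)) = ⇑(DoubleCentralizer.coeHom (𝕜 := ℂ) (A := A)) :=
  rfl

lemma isometry_coe : Isometry ((↑) : A → 𝓜(ℂ, A)) := by
  rw [coe_eq_coeHom]
  exact NonUnitalStarAlgHom.isometry _ (coe_eq_coeHom (A := A) ▸ coe_injective)

lemma isClosed_range_coe : IsClosed (Set.range ((↑) : A → 𝓜(ℂ, A))) :=
  (isometry_coe (A := A)).isClosedEmbedding.isClosed_range

lemma maps_into {A B : Type*} [NonUnitalCStarAlgebra A] [NonUnitalCStarAlgebra B]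
    (f : 𝓜(ℂ, A) →⋆ₐ[ℂ] 𝓜(ℂ, B)) (g : 𝓜(ℂ, B) →⋆ₐ[ℂ] 𝓜(ℂ, A))
    (hg : StrictlyContinuous ⇑g) (u : unitary 𝓜(ℂ, B))
    (hu : ∀ m : 𝓜(ℂ, B), f (g m) = (u : 𝓜(ℂ, B)) * m * star (u : 𝓜(ℂ, B)))
    (a : A) : ∃ b : B, f (a : 𝓜(ℂ, A)) = (b : 𝓜(ℂ, B)) := by
  have hmem : f (a : 𝓜(ℂ, A)) ∈ closure (Set.range ((↑) : B → 𝓜(ℂ, B))) := by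
    rw [Metric.mem_closure_iff]
    intro ε hε
    obtain ⟨b, hb⟩ := exists_approx_strict g hg a hε
    set a' : A := (g (b : 𝓜(ℂ, B))).fst a with ha'
    refine ⟨f (a' : 𝓜(ℂ, A)), ?_, ?_⟩
    · -- f ↑a' ∈ range coe
      have h1 : ((a' : 𝓜(ℂ, A))) = g (b : 𝓜(ℂ, B)) * (a : 𝓜(ℂ, A)) := (mul_coe _ _).symm
      have h2 : f (a' : 𝓜(ℂ, A)) = ((u : 𝓜(ℂ, B)) * (b : 𝓜(ℂ, B)) * star (u : 𝓜(ℂ, B))) *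
          f (a : 𝓜(ℂ, A)) := by
        rw [h1, map_mul, hu]
      set b₁ : B := (u : 𝓜(ℂ, B)).fst b with hb₁
      have h3 : (u : 𝓜(ℂ, B)) * (b : 𝓜(ℂ, B)) = (b₁ : 𝓜(ℂ, B)) := mul_coe _ _
      have h4 : f (a' : 𝓜(ℂ, A)) =
          (b₁ : 𝓜(ℂ, B)) * (star (u : 𝓜(ℂ, B)) * f (a : 𝓜(ℂ, A))) := by
        rw [h2, ← h3]; noncomm_ring
      rw [h4, coe_mul]
      exact Set.mem_range_self _
    · have hsub : ((a - a' : A) : 𝓜(ℂ, A)) = (a : 𝓜(ℂ, A)) - (a' : 𝓜(ℂ, A)) :=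
        map_sub (DoubleCentralizer.coeHom (𝕜 := ℂ) (A := A)) a a'
      rw [dist_eq_norm, ← map_sub, ← hsub]
      calc ‖f (((a - a' : A) : 𝓜(ℂ, A)))‖ ≤ ‖((a - a' : A) : 𝓜(ℂ, A))‖ :=
            NonUnitalStarAlgHom.norm_apply_le f _
        _ = ‖a - a'‖ := by
            rw [coe_eq_coeHom]
            exact NonUnitalStarAlgHom.norm_map _ (coe_eq_coeHom (A := A) ▸ coe_injective) _
        _ = ‖a' - a‖ := norm_sub_rev _ _
        _ < ε := hb
  rw [(isClosed_range_coe (A := B)).closure_eq] at hmem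
  obtain ⟨b, hb⟩ := hmem
  exact ⟨b, hb.symm⟩


lemma coe_add (x y : A) : ((x + y : A) : 𝓜(ℂ, A)) = (x : 𝓜(ℂ, A)) + y :=
  map_add (DoubleCentralizer.coeHom (𝕜 := ℂ) (A := A)) x y

lemma coe_mul'' (x y : A) : ((x * y : A) : 𝓜(ℂ, A)) = (x : 𝓜(ℂ, A)) * y :=
  map_mul (DoubleCentralizer.coeHom (𝕜 := ℂ) (A := A)) x y

lemma coe_star (x : A) : ((star x : A) : 𝓜(ℂ, A)) = star (x : 𝓜(ℂ, A)) :=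
  map_star (DoubleCentralizer.coeHom (𝕜 := ℂ) (A := A)) x

lemma coe_smul (c : ℂ) (x : A) : ((c • x : A) : 𝓜(ℂ, A)) = c • (x : 𝓜(ℂ, A)) :=
  map_smul (DoubleCentralizer.coeHom (𝕜 := ℂ) (A := A)) c x

lemma ext_mul {m₁ m₂ : 𝓜(ℂ, A)} (h1 : ∀ a : A, m₁.fst a = m₂.fst a)
    (h2 : ∀ a : A, m₁.snd a = m₂.snd a) : m₁ = m₂ :=
  DoubleCentralizer.ext _ _ _ _
    (Prod.ext (ContinuousLinearMap.ext h1) (ContinuousLinearMap.ext h2))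

lemma unitary_cancel (v : unitary 𝓜(ℂ, A)) {x y : 𝓜(ℂ, A)}
    (h : (v : 𝓜(ℂ, A)) * x * star (v : 𝓜(ℂ, A)) =
      (v : 𝓜(ℂ, A)) * y * star (v : 𝓜(ℂ, A))) : x = y := by
  have h1 : star (v : 𝓜(ℂ, A)) * (v : 𝓜(ℂ, A)) = 1 := (Unitary.mem_iff.mp v.prop).1
  have e1 : ∀ z : 𝓜(ℂ, A),
      star (v : 𝓜(ℂ, A)) * ((v : 𝓜(ℂ, A)) * z * star (v : 𝓜(ℂ, A))) * (v : 𝓜(ℂ, A)) = z := by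
    intro z
    calc star (v : 𝓜(ℂ, A)) * ((v : 𝓜(ℂ, A)) * z * star (v : 𝓜(ℂ, A))) * (v : 𝓜(ℂ, A))
        = (star (v : 𝓜(ℂ, A)) * (v : 𝓜(ℂ, A))) * z *
            (star (v : 𝓜(ℂ, A)) * (v : 𝓜(ℂ, A))) := by noncomm_ring
      _ = z := by rw [h1, one_mul, mul_one]
  rw [← e1 x, h, e1 y]


end Aux

open Aux

theorem statement8
    {A B : Type*} [NonUnitalCStarAlgebra A] [NonUnitalCStarAlgebra B]
    (f : 𝓜(ℂ, A) →⋆ₐ[ℂ] 𝓜(ℂ, B)) (hf : StrictlyContinuous f) :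
    -- `f` is an equivalence in `𝔠*(2)` ...
    (∃ g : 𝓜(ℂ, B) →⋆ₐ[ℂ] 𝓜(ℂ, A), StrictlyContinuous ⇑g ∧
      ∃ u : unitary 𝓜(ℂ, B), ∃ v : unitary 𝓜(ℂ, A),
        (∀ m : 𝓜(ℂ, B), f (g m) = (u : 𝓜(ℂ, B)) * m * star (u : 𝓜(ℂ, B))) ∧
        (∀ m : 𝓜(ℂ, A), g (f m) = (v : 𝓜(ℂ, A)) * m * star (v : 𝓜(ℂ, A))))
    -- ... if and only if `f` restricts to a C*-isomorphism `A ≅ B`: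
    ↔ (∃ φ : A ≃⋆ₐ[ℂ] B, ∀ a : A, f (a : 𝓜(ℂ, A)) = ((φ a : B) : 𝓜(ℂ, B))) := by
  constructor
  · rintro ⟨g, hg, u, v, hu, hv⟩
    choose φ0 hφ0 using maps_into f g hg u hu
    choose ψ0 hψ0 using maps_into g f hf v hv
    have key : ∀ a : A, g (f (a : 𝓜(ℂ, A))) =
        (v : 𝓜(ℂ, A)) * (a : 𝓜(ℂ, A)) * star (v : 𝓜(ℂ, A)) := fun a => hv _
    -- homomorphism properties of φ0
    have hadd : ∀ x y : A, φ0 (x + y) = φ0 x + φ0 y := by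
      intro x y
      apply coe_injective
      rw [coe_add, ← hφ0, ← hφ0, ← hφ0, coe_add, map_add]
    have hmul : ∀ x y : A, φ0 (x * y) = φ0 x * φ0 y := by
      intro x y
      apply coe_injective
      rw [coe_mul'', ← hφ0, ← hφ0, ← hφ0, coe_mul'', map_mul]
    have hsmul : ∀ (c : ℂ) (x : A), φ0 (c • x) = c • φ0 x := by
      intro c x
      apply coe_injective
      rw [coe_smul, ← hφ0, ← hφ0, coe_smul, map_smul]
    have hzero : φ0 0 = 0 := by
      apply coe_injective
      rw [← hφ0]
      have h0A : ((0 : A) : 𝓜(ℂ, A)) = 0 := map_zero (DoubleCentralizer.coeHom (𝕜 := ℂ) (A := A))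
      have h0B : ((0 : B) : 𝓜(ℂ, B)) = 0 := map_zero (DoubleCentralizer.coeHom (𝕜 := ℂ) (A := B))
      rw [h0A, h0B, map_zero]
    have hstar : ∀ x : A, φ0 (star x) = star (φ0 x) := by
      intro x
      apply coe_injective
      rw [coe_star, ← hφ0, ← hφ0, coe_star, map_star]
    have hinj : Function.Injective φ0 := by
      intro x y h
      have h1 : f (x : 𝓜(ℂ, A)) = f (y : 𝓜(ℂ, A)) := by rw [hφ0, hφ0, h]
      have h2 := congrArg g h1
      rw [key, key] at h2
      exact coe_injective (unitary_cancel v h2)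
    have hsurj : Function.Surjective φ0 := by
      intro b
      set b₁ : B := (star (u : 𝓜(ℂ, B))).fst b with hb₁
      set b₂ : B := (u : 𝓜(ℂ, B)).snd b₁ with hb₂
      have h1 : (b₂ : 𝓜(ℂ, B)) = star (u : 𝓜(ℂ, B)) * (b : 𝓜(ℂ, B)) * (u : 𝓜(ℂ, B)) := by
        rw [hb₂, ← coe_mul, hb₁, ← mul_coe]
      have huu : (u : 𝓜(ℂ, B)) * star (u : 𝓜(ℂ, B)) = 1 := (Unitary.mem_iff.mp u.prop).2
      have h2 : f (g (b₂ : 𝓜(ℂ, B))) = (b : 𝓜(ℂ, B)) := by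
        rw [hu, h1]
        calc (u : 𝓜(ℂ, B)) * (star (u : 𝓜(ℂ, B)) * (b : 𝓜(ℂ, B)) * (u : 𝓜(ℂ, B))) *
              star (u : 𝓜(ℂ, B))
            = ((u : 𝓜(ℂ, B)) * star (u : 𝓜(ℂ, B))) * (b : 𝓜(ℂ, B)) *
              ((u : 𝓜(ℂ, B)) * star (u : 𝓜(ℂ, B))) := by noncomm_ring
          _ = (b : 𝓜(ℂ, B)) := by rw [huu, one_mul, mul_one]
      refine ⟨ψ0 b₂, ?_⟩
      apply coe_injective (A := B)
      rw [← hφ0, ← hψ0, h2]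
    let ψhom : A →⋆ₙₐ[ℂ] B :=
      { toFun := φ0
        map_add' := hadd
        map_mul' := hmul
        map_smul' := hsmul
        map_zero' := hzero
        map_star' := hstar }
    refine ⟨StarAlgEquiv.ofBijective ψhom (show Function.Bijective φ0 from ⟨hinj, hsurj⟩), fun a => ?_⟩
    rw [StarAlgEquiv.ofBijective_apply]
    exact hφ0 a
  · rintro ⟨φ, hφ⟩
    classical
    let Φ : A →L[ℂ] B :=
      { toFun := ⇑φ
        map_add' := map_add φ
        map_smul' := map_smul φ
        cont := (StarAlgEquiv.isometry φ).continuous }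
    let Ψ : B →L[ℂ] A :=
      { toFun := ⇑φ.symm
        map_add' := map_add φ.symm
        map_smul' := map_smul φ.symm
        cont := (StarAlgEquiv.isometry φ.symm).continuous }
    let G : 𝓜(ℂ, B) → 𝓜(ℂ, A) := fun m =>
      { fst := Ψ.comp (m.fst.comp Φ)
        snd := Ψ.comp (m.snd.comp Φ)
        central := by
          intro x y
          apply EquivLike.injective φ
          show φ (φ.symm (m.snd (φ x)) * y) = φ (x * φ.symm (m.fst (φ y)))
          rw [map_mul, map_mul, StarAlgEquiv.apply_symm_apply,
            StarAlgEquiv.apply_symm_apply, m.central] }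
    have hΦ : ∀ a : A, Φ a = φ a := fun _ => rfl
    have hΨ : ∀ b : B, Ψ b = φ.symm b := fun _ => rfl
    have hGfst : ∀ (m : 𝓜(ℂ, B)) (a : A), (G m).fst a = φ.symm (m.fst (φ a)) :=
      fun _ _ => rfl
    have hGsnd : ∀ (m : 𝓜(ℂ, B)) (a : A), (G m).snd a = φ.symm (m.snd (φ a)) :=
      fun _ _ => rfl
    have hGone : G 1 = 1 := by
      refine ext_mul (fun a => ?_) (fun a => ?_) <;>
        simp [hGfst, hGsnd, DoubleCentralizer.one_fst, DoubleCentralizer.one_snd, hΦ, hΨ, StarAlgEquiv.symm_apply_apply]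
    have hGmul : ∀ m n, G (m * n) = G m * G n := by
      intro m n
      refine ext_mul (fun a => ?_) (fun a => ?_) <;>
        simp [hGfst, hGsnd, DoubleCentralizer.mul_fst, DoubleCentralizer.mul_snd,
          ContinuousLinearMap.mul_apply, StarAlgEquiv.apply_symm_apply, hΦ, hΨ, StarAlgEquiv.symm_apply_apply]
    have hGzero : G 0 = 0 := by
      refine ext_mul (fun a => ?_) (fun a => ?_) <;>
        simp [hGfst, hGsnd, DoubleCentralizer.zero_fst, DoubleCentralizer.zero_snd, hΦ, hΨ, StarAlgEquiv.symm_apply_apply]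
    have hGadd : ∀ m n, G (m + n) = G m + G n := by
      intro m n
      refine ext_mul (fun a => ?_) (fun a => ?_) <;>
        simp [hGfst, hGsnd, DoubleCentralizer.add_fst, DoubleCentralizer.add_snd, hΦ, hΨ, StarAlgEquiv.symm_apply_apply]
    have hGsmul : ∀ (c : ℂ) (m : 𝓜(ℂ, B)), G (c • m) = c • G m := by
      intro c m
      refine ext_mul (fun a => ?_) (fun a => ?_) <;>
        simp [hGfst, hGsnd, DoubleCentralizer.smul_fst, DoubleCentralizer.smul_snd, hΦ, hΨ, StarAlgEquiv.symm_apply_apply]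
    have hGstar : ∀ m, G (star m) = star (G m) := by
      intro m
      refine ext_mul (fun a => ?_) (fun a => ?_)
      · rw [hGfst, DoubleCentralizer.star_fst, DoubleCentralizer.star_fst, hGsnd,
          ← map_star φ.symm, ← map_star φ]
      · rw [hGsnd, DoubleCentralizer.star_snd, DoubleCentralizer.star_snd, hGfst,
          ← map_star φ.symm, ← map_star φ]
    let gHom : 𝓜(ℂ, B) →⋆ₐ[ℂ] 𝓜(ℂ, A) :=
      { toFun := G
        map_one' := hGone
        map_mul' := hGmul
        map_zero' := hGzero
        map_add' := hGadd
        commutes' := fun c => by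
          show G (algebraMap ℂ 𝓜(ℂ, B) c) = algebraMap ℂ 𝓜(ℂ, A) c
          rw [Algebra.algebraMap_eq_smul_one, Algebra.algebraMap_eq_smul_one,
            hGsmul, hGone]
        map_star' := hGstar }
    have hGcont : StrictlyContinuous ⇑gHom := by
      show @Continuous _ _ (strictTopology B) (strictTopology A) G
      unfold strictTopology
      refine continuous_iInf_rng.mpr fun a => ?_
      refine continuous_induced_rng.mpr ?_
      have h1 := strict_continuous_pair (A := B) (φ a)
      have h2 : Continuous fun p : B × B => (φ.symm p.1, φ.symm p.2) :=
        ((StarAlgEquiv.isometry φ.symm).continuous.comp continuous_fst).prodMk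
          ((StarAlgEquiv.isometry φ.symm).continuous.comp continuous_snd)
      have h3 : @Continuous _ _ (strictTopology B) _
          ((fun p : B × B => (φ.symm p.1, φ.symm p.2)) ∘
            (fun m : 𝓜(ℂ, B) => (m.fst (φ a), m.snd (φ a)))) :=
        @Continuous.comp _ _ _ (strictTopology B) _ _ _ _ h2 h1
      exact h3
    have hφsymm : ∀ b : B, ((b : B) : 𝓜(ℂ, B)) = f ((φ.symm b : A) : 𝓜(ℂ, A)) := by
      intro b
      rw [hφ, StarAlgEquiv.apply_symm_apply]
    have hfg : ∀ m : 𝓜(ℂ, B), f (gHom m) = m := by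
      intro m
      refine ext_mul (fun b => ?_) (fun b => ?_)
      · apply coe_injective (A := B)
        rw [← mul_coe, ← mul_coe]
        calc f (gHom m) * (b : 𝓜(ℂ, B))
            = f (gHom m) * f ((φ.symm b : A) : 𝓜(ℂ, A)) := by rw [← hφsymm]
          _ = f (gHom m * ((φ.symm b : A) : 𝓜(ℂ, A))) := (map_mul f _ _).symm
          _ = f (((gHom m).fst (φ.symm b) : A) : 𝓜(ℂ, A)) := by rw [mul_coe]
          _ = ((φ ((gHom m).fst (φ.symm b)) : B) : 𝓜(ℂ, B)) := hφ _
          _ = ((φ (φ.symm (m.fst (φ (φ.symm b)))) : B) : 𝓜(ℂ, B)) := rfl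
          _ = ((m.fst b : B) : 𝓜(ℂ, B)) := by
              rw [StarAlgEquiv.apply_symm_apply, StarAlgEquiv.apply_symm_apply]
          _ = m * (b : 𝓜(ℂ, B)) := (mul_coe _ _).symm
      · apply coe_injective (A := B)
        rw [← coe_mul, ← coe_mul]
        calc (b : 𝓜(ℂ, B)) * f (gHom m)
            = f ((φ.symm b : A) : 𝓜(ℂ, A)) * f (gHom m) := by rw [← hφsymm]
          _ = f (((φ.symm b : A) : 𝓜(ℂ, A)) * gHom m) := (map_mul f _ _).symm
          _ = f (((gHom m).snd (φ.symm b) : A) : 𝓜(ℂ, A)) := by rw [coe_mul]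
          _ = ((φ ((gHom m).snd (φ.symm b)) : B) : 𝓜(ℂ, B)) := hφ _
          _ = ((φ (φ.symm (m.snd (φ (φ.symm b)))) : B) : 𝓜(ℂ, B)) := rfl
          _ = ((m.snd b : B) : 𝓜(ℂ, B)) := by
              rw [StarAlgEquiv.apply_symm_apply, StarAlgEquiv.apply_symm_apply]
          _ = (b : 𝓜(ℂ, B)) * m := (coe_mul _ _).symm
    have hgf : ∀ m : 𝓜(ℂ, A), gHom (f m) = m := by
      intro m
      refine ext_mul (fun a => ?_) (fun a => ?_)
      · show φ.symm ((f m).fst (φ a)) = m.fst a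
        apply EquivLike.injective φ
        rw [StarAlgEquiv.apply_symm_apply]
        apply coe_injective (A := B)
        calc (((f m).fst (φ a) : B) : 𝓜(ℂ, B)) = f m * ((φ a : B) : 𝓜(ℂ, B)) :=
              (mul_coe _ _).symm
          _ = f m * f ((a : A) : 𝓜(ℂ, A)) := by rw [hφ]
          _ = f (m * ((a : A) : 𝓜(ℂ, A))) := (map_mul f _ _).symm
          _ = f (((m.fst a : A) : 𝓜(ℂ, A))) := by rw [mul_coe]
          _ = ((φ (m.fst a) : B) : 𝓜(ℂ, B)) := hφ _
      · show φ.symm ((f m).snd (φ a)) = m.snd a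
        apply EquivLike.injective φ
        rw [StarAlgEquiv.apply_symm_apply]
        apply coe_injective (A := B)
        calc (((f m).snd (φ a) : B) : 𝓜(ℂ, B)) = ((φ a : B) : 𝓜(ℂ, B)) * f m :=
              (coe_mul _ _).symm
          _ = f ((a : A) : 𝓜(ℂ, A)) * f m := by rw [hφ]
          _ = f (((a : A) : 𝓜(ℂ, A)) * m) := (map_mul f _ _).symm
          _ = f (((m.snd a : A) : 𝓜(ℂ, A))) := by rw [coe_mul]
          _ = ((φ (m.snd a) : B) : 𝓜(ℂ, B)) := hφ _
    refine ⟨gHom, hGcont, 1, 1, fun m => ?_, fun m => ?_⟩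
    · rw [hfg m, OneMemClass.coe_one, star_one, one_mul, mul_one]
    · rw [hgf m, OneMemClass.coe_one, star_one, one_mul, mul_one]
end

section
/- Given a crossed module of groups (G, H, ∂ : H → G, c : G → Aut(H)), the associated structure with one object, arrows G, and bigons H ⋊ G — where (h, g) is a 2-morphism from g to ∂(h)g, horizontal composition is (h₁,g₁)·ₕ(h₂,g₂) = (h₁ c_{g₁}(h₂), g₁g₂), and vertical composition is (h', ∂(h)g)·ᵥ(h,g) = (h'h, g) — is a strict 2-group: both compositions are associative and unital, and the interchange law holds. -/
/-!
STATEMENT 10: Given a crossed module of groups `(G, H, ∂, c)`, the structure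
with one object, arrows `G`, and bigons `H ⋊ G` — where `(h, g)` is a
2-morphism from `g` to `∂(h)g`, with horizontal composition
`(h₁,g₁) ·ₕ (h₂,g₂) = (h₁ c_{g₁}(h₂), g₁g₂)` and vertical composition
`(h', d(h)g) ·ᵥ (h,g) = (h'h, g)` — is a strict 2-group: both compositions
are associative and unital, and the interchange law holds.
-/

theorem statement10
    {G H : Type*} [Group G] [Group H]
    (d : H →* G) (c : G →* MulAut H)
    (hpeiffer₁ : ∀ (g : G) (h : H), d (c g h) = g * d h * g⁻¹)
    (hpeiffer₂ : ∀ h h' : H, c (d h) h' = h * h' * h⁻¹)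
    -- horizontal and vertical composition of bigons:
    (hcomp : (H × G) → (H × G) → (H × G))
    (hhcomp : ∀ p q : H × G, hcomp p q = (p.1 * c p.2 q.1, p.2 * q.2))
    (vcomp : (H × G) → (H × G) → (H × G))
    (hvcomp : ∀ p q : H × G, vcomp p q = (p.1 * q.1, q.2)) :
    -- sources and targets: `(h, g)` is a bigon `g ⇒ d(h)g`; the vertical
    -- composite of `(h', d(h)g) : d(h)g ⇒ d(h'h)g` with `(h, g) : g ⇒ d(h)g`
    -- is `(h'h, g) : g ⇒ d(h'h)g`:
    (∀ (h h' : H) (g : G), vcomp (h', d h * g) (h, g) = (h' * h, g)) ∧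
    -- horizontal composition is associative and unital:
    (∀ p q r : H × G, hcomp (hcomp p q) r = hcomp p (hcomp q r)) ∧
    (∀ p : H × G, hcomp (1, 1) p = p ∧ hcomp p (1, 1) = p) ∧
    -- vertical composition is associative and unital (units are the bigons
    -- `(1, g)`):
    (∀ p q r : H × G, vcomp (vcomp p q) r = vcomp p (vcomp q r)) ∧
    (∀ (h : H) (g : G), vcomp (1, d h * g) (h, g) = (h, g) ∧
      vcomp (h, g) (1, g) = (h, g)) ∧
    -- the interchange law:
    (∀ (h₁ h₁' h₂ h₂' : H) (g₁ g₂ : G),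
      hcomp (vcomp (h₁', d h₁ * g₁) (h₁, g₁)) (vcomp (h₂', d h₂ * g₂) (h₂, g₂))
        = vcomp (hcomp (h₁', d h₁ * g₁) (h₂', d h₂ * g₂))
            (hcomp (h₁, g₁) (h₂, g₂))) := by
  refine ⟨fun h h' g => by simp [hvcomp], fun p q r => by
    simp [hhcomp, map_mul, mul_assoc], fun p => by simp [hhcomp],
    fun p q r => by simp [hvcomp, mul_assoc], fun h g => by simp [hvcomp], ?_⟩
  intro h₁ h₁' h₂ h₂' g₁ g₂
  simp only [hvcomp, hhcomp, map_mul, MulAut.mul_apply, hpeiffer₂, Prod.mk.injEq]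
  constructor
  · group
  · group
end

section
/- Let (A_g)_{g∈G} be an upper semi-continuous Banach bundle over a locally compact group G equipped with continuous multiplication and involution satisfying all the algebraic axioms of a Fell bundle. Then the norm function a ↦ ‖a‖ is continuous on the total space; hence A is a continuous Fell bundle. -/
/-!
STATEMENT 17: If `(A_g)_{g∈G}` is an upper semi-continuous Banach bundle over
a locally compact group `G` with continuous multiplication and involution
satisfying the algebraic axioms of a Fell bundle, then the norm is continuous
on the total space; hence the bundle is a continuous Fell bundle.

We work with the total space `𝒜` of the bundle, its continuous projection
`p : 𝒜 → G`, its fibrewise-defined norm `nrm : 𝒜 → ℝ` (upper semi-continuous,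
and continuous on the unit fibre `p⁻¹(1)`, whose subspace topology is the
Banach space topology of the C*-algebra `A₁`), and the globally defined
continuous multiplication and involution of the Fell bundle.
-/

theorem statement17
    {G : Type*} [Group G] [TopologicalSpace G] [IsTopologicalGroup G]
    [LocallyCompactSpace G]
    (𝒜 : Type*) [TopologicalSpace 𝒜]
    (p : 𝒜 → G) (hp : Continuous p) (hpsurj : Function.Surjective p)
    (nrm : 𝒜 → ℝ) (hnonneg : ∀ a : 𝒜, 0 ≤ nrm a)
    -- upper semi-continuity of the norm (the bundle is u.s.c.):
    (husc : UpperSemicontinuous nrm)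
    -- multiplication and involution, continuous and covering the group
    -- multiplication and inversion:
    (mul : 𝒜 → 𝒜 → 𝒜) (hmul_cont : Continuous fun q : 𝒜 × 𝒜 => mul q.1 q.2)
    (hmul_p : ∀ a b : 𝒜, p (mul a b) = p a * p b)
    (star' : 𝒜 → 𝒜) (hstar_cont : Continuous star')
    (hstar_p : ∀ a : 𝒜, p (star' a) = (p a)⁻¹)
    -- the C*-identity `‖a‖² = ‖a*a‖`:
    (hCstar : ∀ a : 𝒜, nrm a ^ 2 = nrm (mul (star' a) a))
    -- the norm is continuous on the unit fibre (the C*-algebra `A₁`):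
    (hfibre : ContinuousOn nrm (p ⁻¹' {1})) :
    Continuous nrm := by
  have hc : Continuous fun a : 𝒜 => nrm (mul (star' a) a) :=
    hfibre.comp_continuous
      (hmul_cont.comp (hstar_cont.prodMk continuous_id))
      (fun a => by simp [hmul_p, hstar_p])
  have heq : nrm = fun a => Real.sqrt (nrm (mul (star' a) a)) := by
    funext a
    rw [← hCstar, Real.sqrt_sq (hnonneg a)]
  rw [heq]
  exact Real.continuous_sqrt.comp hc
end
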